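/- Let f : ℝ → ℝ be continuous, t ∈ ℝ, σ ∈ (0,1), and suppose there exist s' ≥ 0, C > 0 and ρ > 0 such that |f(u) − f(v)| ≤ C|u − v|^σ (|u − t| + |v − t|)^{−s'} for all u, v ∈ B(t,ρ) with (u,v) ≠ (t,t). Then the local Hausdorff dimension of the graph of f at t satisfies dim_{H,t} Gr(f) ≤ 2 − σ. -/

import Mathlib

open Filter MeasureTheory Set Topology
open scoped ENNReal NNReal

/-- The graph of `f : ℝ → ℝ` over `V ⊆ ℝ`, as a subset of the Euclidean plane. -/
def graphE (f : ℝ → ℝ) (V : Set ℝ) : Set (EuclideanSpace ℝ (Fin 2)) :=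
  {p | ∃ u ∈ V, p = ![u, f u]}

/-- The local Hausdorff dimension of the graph of `f` at `t`:
`lim_{ρ→0⁺} dimH Gr(f,(t−ρ,t+ρ))`; since the inner quantity is nondecreasing in `ρ`, the
limit is the infimum over `ρ > 0`. -/
noncomputable def hausLoc (f : ℝ → ℝ) (t : ℝ) : ℝ≥0∞ :=
  ⨅ (ρ : ℝ) (_ : 0 < ρ), dimH (graphE f (Ioo (t - ρ) (t + ρ)))

lemma dist_pair_le (p q : EuclideanSpace ℝ (Fin 2)) :
    dist p q ≤ |p 0 - q 0| + |p 1 - q 1| := by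
  rw [EuclideanSpace.dist_eq]
  have h1 : ∑ i : Fin 2, dist (p i) (q i) ^ 2 = |p 0 - q 0| ^ 2 + |p 1 - q 1| ^ 2 := by
    simp [Fin.sum_univ_two, Real.dist_eq, sq_abs]
  rw [h1]
  calc √(|p 0 - q 0| ^ 2 + |p 1 - q 1| ^ 2) ≤ √((|p 0 - q 0| + |p 1 - q 1|) ^ 2) :=
      Real.sqrt_le_sqrt (by nlinarith [abs_nonneg (p 0 - q 0), abs_nonneg (p 1 - q 1)])
    _ = |p 0 - q 0| + |p 1 - q 1| := Real.sqrt_sq (by positivity)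

lemma hausdorff_graphE_zero (f : ℝ → ℝ) {s : Set ℝ} {a b K σ : ℝ}
    (hσ0 : 0 < σ) (hσ1 : σ < 1) (hK : 0 ≤ K) (hab : 0 ≤ b - a) (hs : s ⊆ Set.Icc a b)
    (hH : ∀ u ∈ s, ∀ v ∈ s, |f u - f v| ≤ K * |u - v| ^ σ)
    {d : ℝ} (hd : 2 - σ < d) :
    μH[d] (graphE f s) = 0 := by
  have hd0 : (0:ℝ) < d := by linarith
  -- scales
  set δ : ℕ → ℝ := fun n => ((n : ℝ) + 1)⁻¹ with hδdef
  have hδ : ∀ n, 0 < δ n := fun n => by positivity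
  have hx : ∀ n : ℕ, (0:ℝ) < (n : ℝ) + 1 := fun n => by positivity
  have hδx : ∀ n : ℕ, δ n * ((n:ℝ)+1) = 1 := fun n => inv_mul_cancel₀ (hx n).ne'
  set N : ℕ → ℕ := fun n => ⌈(b - a) * ((n : ℝ) + 1)⌉₊ + 1 with hNdef
  set M : ℕ → ℕ := fun n => ⌈K * ((n : ℝ) + 1) ^ (1 - σ)⌉₊ + 1 with hMdef
  set I : ℕ → ℕ → Set ℝ := fun n j =>
    s ∩ Set.Icc (a + j * δ n) (a + (j + 1) * δ n) with hIdef
  have hpick : ∀ n j, ∃ u : ℝ, (I n j).Nonempty → u ∈ I n j := by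
    intro n j
    by_cases h : (I n j).Nonempty
    · exact ⟨h.choose, fun _ => h.choose_spec⟩
    · exact ⟨0, fun h' => absurd h' h⟩
  choose u hu using hpick
  set T : ∀ n : ℕ, Fin (N n) × Fin (M n) → Set (EuclideanSpace ℝ (Fin 2)) := fun n jk =>
    graphE f {v ∈ I n (jk.1 : ℕ) |
      f (u n jk.1) - K * δ n ^ σ + (jk.2 : ℕ) * (2 * δ n) ≤ f v ∧
      f v ≤ f (u n jk.1) - K * δ n ^ σ + ((jk.2 : ℕ) + 1) * (2 * δ n)} with hTdef
  -- diameter bound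
  have hdiam : ∀ n jk, EMetric.diam (T n jk) ≤ ENNReal.ofReal (3 * δ n) := by
    intro n jk
    apply EMetric.diam_le
    rintro p ⟨v1, hv1, hp⟩ q ⟨v2, hv2, hq⟩
    rw [edist_dist]
    apply ENNReal.ofReal_le_ofReal
    have h1 : |v1 - v2| ≤ δ n := by
      obtain ⟨⟨_, hl1, hr1⟩, _, _⟩ := hv1
      obtain ⟨⟨_, hl2, hr2⟩, _, _⟩ := hv2
      rw [abs_sub_le_iff]; constructor <;> nlinarith [hδ n]
    have h2 : |f v1 - f v2| ≤ 2 * δ n := by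
      obtain ⟨_, hl1, hr1⟩ := hv1
      obtain ⟨_, hl2, hr2⟩ := hv2
      rw [abs_sub_le_iff]; constructor <;> nlinarith [hδ n]
    refine le_trans (dist_pair_le _ _) ?_
    simp only [hp, hq, Matrix.cons_val_zero, Matrix.cons_val_one, Matrix.head_cons]
    have := hδ n
    linarith [h1, h2]
  -- coverage
  have hcov : ∀ n, graphE f s ⊆ ⋃ jk : Fin (N n) × Fin (M n), T n jk := by
    rintro n p ⟨v, hv, hp⟩
    have hv' := hs hv
    set j0 : ℕ := ⌊(v - a) * ((n : ℝ) + 1)⌋₊ with hj0def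
    have hva : 0 ≤ (v - a) * ((n : ℝ) + 1) := mul_nonneg (by linarith [hv'.1]) (hx n).le
    have hj0le : (j0 : ℝ) ≤ (v - a) * ((n : ℝ) + 1) := Nat.floor_le hva
    have hj0lt : (v - a) * ((n : ℝ) + 1) < j0 + 1 := Nat.lt_floor_add_one _
    have hj0N : j0 < N n := by
      have h1 : j0 ≤ ⌊(b - a) * ((n : ℝ) + 1)⌋₊ :=
        Nat.floor_mono (by nlinarith [hv'.2, hx n])
      have h2 := Nat.floor_le_ceil ((b - a) * ((n : ℝ) + 1))
      have h3 : N n = ⌈(b - a) * ((n : ℝ) + 1)⌉₊ + 1 := rfl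
      omega
    have hvI : v ∈ I n j0 := by
      refine ⟨hv, ?_, ?_⟩
      · nlinarith [hδ n, hδx n]
      · nlinarith [hδ n, hδx n]
    have hune := hu n j0 ⟨v, hvI⟩
    set u0 := u n j0 with hu0def
    have hu0s : u0 ∈ s := hune.1
    have huv : |v - u0| ≤ δ n := by
      obtain ⟨_, hl, hr⟩ := hune
      obtain ⟨_, hl2, hr2⟩ := hvI
      rw [abs_sub_le_iff]; constructor <;> nlinarith [hδ n]
    have hfuv : |f v - f u0| ≤ K * δ n ^ σ :=
      (hH v hv u0 hu0s).trans
        (mul_le_mul_of_nonneg_left (Real.rpow_le_rpow (abs_nonneg _) huv hσ0.le) hK)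
    have habs := abs_le.1 hfuv
    set x := f v - (f u0 - K * δ n ^ σ) with hxdef
    have hx0 : 0 ≤ x := by simp only [hxdef]; linarith [habs.2]
    have hx2 : x ≤ 2 * (K * δ n ^ σ) := by simp only [hxdef]; linarith [habs.1]
    have h2δ : (0:ℝ) < 2 * δ n := by linarith [hδ n]
    set k0 : ℕ := ⌊x / (2 * δ n)⌋₊ with hk0def
    have hk0le : (k0 : ℝ) * (2 * δ n) ≤ x :=
      (le_div_iff₀ h2δ).1 (Nat.floor_le (by positivity))
    have hk0lt : x < ((k0 : ℝ) + 1) * (2 * δ n) :=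
      (div_lt_iff₀ h2δ).1 (Nat.lt_floor_add_one _)
    have hk0M : k0 < M n := by
      have hrw : δ n ^ σ / δ n = ((n : ℝ) + 1) ^ (1 - σ) := by
        rw [hδdef]
        rw [Real.inv_rpow (hx n).le, Real.rpow_sub (hx n), Real.rpow_one]
        field_simp
      have hb1 : x / (2 * δ n) ≤ K * ((n : ℝ) + 1) ^ (1 - σ) := by
        rw [← hrw]
        rw [div_le_iff₀ h2δ]
        have : K * (δ n ^ σ / δ n) * (2 * δ n) = 2 * (K * δ n ^ σ) := by
          rw [mul_comm (2:ℝ) (δ n), ← mul_assoc, mul_assoc K, div_mul_cancel₀ _ (hδ n).ne']; ring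
        rw [this]; exact hx2
      have h1 : k0 ≤ ⌊K * ((n : ℝ) + 1) ^ (1 - σ)⌋₊ := Nat.floor_mono hb1
      have h2 := Nat.floor_le_ceil (K * ((n : ℝ) + 1) ^ (1 - σ))
      have h3 : M n = ⌈K * ((n : ℝ) + 1) ^ (1 - σ)⌉₊ + 1 := rfl
      omega
    refine Set.mem_iUnion.2 ⟨(⟨j0, hj0N⟩, ⟨k0, hk0M⟩), v, ⟨hvI, ?_, ?_⟩, hp⟩
    · simp only [hxdef] at hk0le; linarith
    · simp only [hxdef] at hk0lt; linarith
  -- sum bound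
  set g : ℕ → ℝ := fun n => (((b - a) + 2 * δ n) * (K + 2 * ((n:ℝ)+1) ^ (σ - 1))) *
      (3 ^ d * ((n:ℝ)+1) ^ (2 - σ - d)) with hgdef
  have hsum : ∀ n, (∑ jk : Fin (N n) × Fin (M n), EMetric.diam (T n jk) ^ d)
      ≤ ENNReal.ofReal (g n) := by
    intro n
    have h3δ : (0:ℝ) < 3 * δ n := by linarith [hδ n]
    have hNb : (N n : ℝ) ≤ ((b - a) + 2 * δ n) * ((n:ℝ) + 1) := by
      have h1 := Nat.ceil_lt_add_one (mul_nonneg hab (hx n).le)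
      have h2 : ((b - a) + 2 * δ n) * ((n:ℝ) + 1) = (b - a) * ((n:ℝ)+1) + 2 * (δ n * ((n:ℝ)+1)) := by
        ring
      rw [h2, hδx n]
      have h3 : (N n : ℝ) = (⌈(b - a) * ((n:ℝ) + 1)⌉₊ : ℝ) + 1 := by push_cast [hNdef]; ring
      rw [h3]; linarith
    have hMb : (M n : ℝ) ≤ (K + 2 * ((n:ℝ)+1) ^ (σ - 1)) * ((n:ℝ) + 1) ^ (1 - σ) := by
      have h1 := Nat.ceil_lt_add_one (mul_nonneg hK (Real.rpow_nonneg (hx n).le (1 - σ)))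
      have hcancel : ((n:ℝ)+1) ^ (σ - 1) * ((n:ℝ)+1) ^ (1 - σ) = 1 := by
        rw [← Real.rpow_add (hx n)]; norm_num
      have h2 : (K + 2 * ((n:ℝ)+1) ^ (σ - 1)) * ((n:ℝ) + 1) ^ (1 - σ)
          = K * ((n:ℝ)+1) ^ (1 - σ) + 2 * (((n:ℝ)+1) ^ (σ - 1) * ((n:ℝ)+1) ^ (1 - σ)) := by ring
      rw [h2, hcancel]
      have h3 : (M n : ℝ) = (⌈K * ((n:ℝ) + 1) ^ (1 - σ)⌉₊ : ℝ) + 1 := by push_cast [hMdef]; ring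
      rw [h3]; linarith
    have hpow : (3 * δ n) ^ d = 3 ^ d * ((n:ℝ)+1) ^ (-d) := by
      rw [Real.mul_rpow (by norm_num) (hδ n).le, hδdef]
      simp only []
      rw [Real.inv_rpow (hx n).le, ← Real.rpow_neg (hx n).le]
    have hreal : (N n : ℝ) * (M n : ℝ) * (3 * δ n) ^ d ≤ g n := by
      have hxp : ((n:ℝ)+1) * ((n:ℝ)+1) ^ (1 - σ) * ((n:ℝ)+1) ^ (-d) = ((n:ℝ)+1) ^ (2 - σ - d) := by
        rw [show (2 - σ - d) = 1 + (1 - σ) + (-d) by ring, Real.rpow_add (hx n),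
          Real.rpow_add (hx n), Real.rpow_one]
      have hb1 : (N n : ℝ) * (M n : ℝ) ≤ (((b - a) + 2 * δ n) * ((n:ℝ) + 1)) *
          ((K + 2 * ((n:ℝ)+1) ^ (σ - 1)) * ((n:ℝ) + 1) ^ (1 - σ)) := by
        apply mul_le_mul hNb hMb (Nat.cast_nonneg _)
        positivity
      have hb2 : (N n : ℝ) * (M n : ℝ) * (3 * δ n) ^ d ≤ (((b - a) + 2 * δ n) * ((n:ℝ) + 1)) *
          ((K + 2 * ((n:ℝ)+1) ^ (σ - 1)) * ((n:ℝ) + 1) ^ (1 - σ)) * (3 * δ n) ^ d :=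
        mul_le_mul_of_nonneg_right hb1 (Real.rpow_nonneg h3δ.le _)
      refine hb2.trans (le_of_eq ?_)
      rw [hpow, hgdef]
      simp only []
      rw [← hxp]; ring
    calc (∑ jk : Fin (N n) × Fin (M n), EMetric.diam (T n jk) ^ d)
        ≤ ∑ _jk : Fin (N n) × Fin (M n), ENNReal.ofReal (3 * δ n) ^ d :=
          Finset.sum_le_sum fun i _ => ENNReal.rpow_le_rpow (hdiam n i) hd0.le
      _ = (N n * M n : ℕ) * ENNReal.ofReal (3 * δ n) ^ d := by
          rw [Finset.sum_const, Finset.card_univ, nsmul_eq_mul]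
          simp
      _ = ENNReal.ofReal ((N n * M n : ℕ) * (3 * δ n) ^ d) := by
          rw [ENNReal.ofReal_rpow_of_pos h3δ, ← ENNReal.ofReal_natCast (N n * M n),
            ← ENNReal.ofReal_mul (Nat.cast_nonneg _)]
      _ ≤ ENNReal.ofReal (g n) := by
          apply ENNReal.ofReal_le_ofReal
          rw [Nat.cast_mul]
          exact hreal
  -- limits
  have h_atTop : Tendsto (fun n : ℕ => (n : ℝ) + 1) atTop atTop :=
    tendsto_atTop_add_const_right _ 1 tendsto_natCast_atTop_atTop
  have htδ : Tendsto δ atTop (𝓝 0) := tendsto_inv_atTop_zero.comp h_atTop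
  have hneg : ∀ e : ℝ, e < 0 → Tendsto (fun n : ℕ => ((n:ℝ)+1) ^ e) atTop (𝓝 0) := by
    intro e he
    have := (tendsto_rpow_neg_atTop (y := -e) (by linarith)).comp h_atTop
    simpa [Function.comp_def] using this
  have hg0 : Tendsto g atTop (𝓝 0) := by
    have h1 : Tendsto (fun n : ℕ => (b - a) + 2 * δ n) atTop (𝓝 ((b - a) + 2 * 0)) :=
      tendsto_const_nhds.add (htδ.const_mul 2)
    have h2 : Tendsto (fun n : ℕ => K + 2 * ((n:ℝ)+1) ^ (σ - 1)) atTop (𝓝 (K + 2 * 0)) :=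
      tendsto_const_nhds.add ((hneg (σ - 1) (by linarith)).const_mul 2)
    have h3 : Tendsto (fun n : ℕ => 3 ^ d * ((n:ℝ)+1) ^ (2 - σ - d)) atTop (𝓝 (3 ^ d * 0)) :=
      (hneg (2 - σ - d) (by linarith)).const_mul _
    have h4 := (h1.mul h2).mul h3
    simpa [hgdef] using h4
  have hr : Tendsto (fun n => ENNReal.ofReal (3 * δ n)) atTop (𝓝 0) := by
    have := ENNReal.tendsto_ofReal (htδ.const_mul 3)
    simpa using this
  have hμ := Measure.hausdorffMeasure_le_liminf_sum d (graphE f s)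
    (fun n => ENNReal.ofReal (3 * δ n)) hr T
    (Eventually.of_forall hdiam) (Eventually.of_forall hcov)
  refine le_antisymm ?_ zero_le
  calc μH[d] (graphE f s)
      ≤ liminf (fun n => ∑ jk : Fin (N n) × Fin (M n), EMetric.diam (T n jk) ^ d) atTop := hμ
    _ ≤ liminf (fun n => ENNReal.ofReal (g n)) atTop :=
        liminf_le_liminf (Eventually.of_forall hsum)
    _ = 0 := by
        have := ENNReal.tendsto_ofReal hg0
        simpa using this.liminf_eq

lemma dimH_graphE_le (f : ℝ → ℝ) {s : Set ℝ} {a b K σ : ℝ}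
    (hσ0 : 0 < σ) (hσ1 : σ < 1) (hK : 0 ≤ K) (hab : 0 ≤ b - a) (hs : s ⊆ Set.Icc a b)
    (hH : ∀ u ∈ s, ∀ v ∈ s, |f u - f v| ≤ K * |u - v| ^ σ) :
    dimH (graphE f s) ≤ ENNReal.ofReal (2 - σ) := by
  refine dimH_le fun d' hd' => ?_
  by_contra hlt
  push_neg at hlt
  have h2 : 2 - σ < (d' : ℝ) := by
    rw [← ENNReal.ofReal_coe_nnreal] at hlt
    exact (ENNReal.ofReal_lt_ofReal_iff_of_nonneg (by linarith)).1 hlt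
  have h0 := hausdorff_graphE_zero f hσ0 hσ1 hK hab hs hH h2
  rw [h0] at hd'
  simp at hd'

/-- If there are `s' ≥ 0`, `C > 0` and `ρ > 0` with
`|f u − f v| ≤ C |u−v|^σ (|u−t|+|v−t|)^{−s'}` for `u, v ∈ B(t,ρ)`, `(u,v) ≠ (t,t)`, then the
local Hausdorff dimension of the graph of `f` at `t` is at most `2 − σ`. -/
theorem stmt_2 (f : ℝ → ℝ) (hf : Continuous f) (t σ : ℝ) (hσ0 : 0 < σ) (hσ1 : σ < 1)
    (hbound : ∃ s' ≥ (0 : ℝ), ∃ C > (0 : ℝ), ∃ ρ > (0 : ℝ),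
      ∀ u ∈ Metric.ball t ρ, ∀ v ∈ Metric.ball t ρ, (u, v) ≠ (t, t) →
        |f u - f v| ≤ C * |u - v| ^ σ * (|u - t| + |v - t|) ^ (-s')) :
    hausLoc f t ≤ ENNReal.ofReal (2 - σ) := by
  obtain ⟨s', hs'0, C, hC, ρ, hρ, hb⟩ := hbound
  refine le_trans (iInf₂_le (ρ / 2) (by linarith)) ?_
  set A : ℕ → Set ℝ := fun n =>
    {u ∈ Set.Ioo (t - ρ/2) (t + ρ/2) | ((n:ℝ) + 1)⁻¹ ≤ |u - t|} with hAdef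
  have hsub : graphE f (Set.Ioo (t - ρ/2) (t + ρ/2)) ⊆
      graphE f {t} ∪ ⋃ n, graphE f (A n) := by
    rintro p ⟨v, hv, hp⟩
    rcases eq_or_ne v t with rfl | hvt
    · exact Or.inl ⟨v, rfl, hp⟩
    · have h1 : 0 < |v - t| := abs_pos.2 (sub_ne_zero.2 hvt)
      obtain ⟨n, hn⟩ := exists_nat_gt (|v - t|)⁻¹
      refine Or.inr (Set.mem_iUnion.2 ⟨n, v, ⟨hv, ?_⟩, hp⟩)
      have hn' : (|v - t|)⁻¹ < (n:ℝ) + 1 := by linarith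
      have h3 : ((n:ℝ) + 1)⁻¹ < |v - t| := (inv_lt_comm₀ (by positivity) h1).2 hn'
      exact h3.le
  calc dimH (graphE f (Set.Ioo (t - ρ/2) (t + ρ/2)))
      ≤ dimH (graphE f {t} ∪ ⋃ n, graphE f (A n)) := dimH_mono hsub
    _ = max (dimH (graphE f {t})) (dimH (⋃ n, graphE f (A n))) := dimH_union _ _
    _ ≤ ENNReal.ofReal (2 - σ) := by
      refine max_le ?_ ?_
      · have hss : (graphE f {t}).Subsingleton := by
          rintro p ⟨v, hv, hp⟩ q ⟨w, hw, hq⟩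
          simp only [Set.mem_singleton_iff] at hv hw
          subst hv; subst hw; rw [← WithLp.toLp_ofLp (x := p), ← WithLp.toLp_ofLp (x := q), hp, hq]
        rw [dimH_subsingleton hss]
        exact zero_le
      · rw [dimH_iUnion]
        refine iSup_le fun n => ?_
        refine dimH_graphE_le f (a := t - ρ/2) (b := t + ρ/2)
          (K := C * ((n:ℝ) + 1) ^ s') hσ0 hσ1 (by positivity) (by linarith)
          (fun u hu => Set.Ioo_subset_Icc_self hu.1) ?_
        intro u hu v hv
        obtain ⟨hu1, hu2⟩ := hu
        obtain ⟨hv1, hv2⟩ := hv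
        have hub : u ∈ Metric.ball t ρ := by
          rw [Metric.mem_ball, Real.dist_eq, abs_sub_lt_iff]
          obtain ⟨h1, h2⟩ := hu1; constructor <;> linarith
        have hvb : v ∈ Metric.ball t ρ := by
          rw [Metric.mem_ball, Real.dist_eq, abs_sub_lt_iff]
          obtain ⟨h1, h2⟩ := hv1; constructor <;> linarith
        have hut : u ≠ t := by
          intro h
          rw [h, sub_self, abs_zero] at hu2
          have : (0:ℝ) < ((n:ℝ) + 1)⁻¹ := by positivity
          linarith
        have hneq : (u, v) ≠ (t, t) := fun h => hut (congrArg Prod.fst h)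
        refine (hb u hub v hvb hneq).trans ?_
        have hεpos : (0:ℝ) < ((n:ℝ) + 1)⁻¹ := by positivity
        have hw : (|u - t| + |v - t|) ^ (-s') ≤ (((n:ℝ) + 1)⁻¹) ^ (-s') :=
          Real.rpow_le_rpow_of_nonpos hεpos
            (hu2.trans (by linarith [abs_nonneg (v - t)])) (neg_nonpos.2 hs'0)
        have hw2 : (((n:ℝ) + 1)⁻¹) ^ (-s') = ((n:ℝ) + 1) ^ s' := by
          rw [Real.inv_rpow (by positivity), Real.rpow_neg (by positivity), inv_inv]
        rw [hw2] at hw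
        calc C * |u - v| ^ σ * (|u - t| + |v - t|) ^ (-s')
            ≤ C * |u - v| ^ σ * ((n:ℝ) + 1) ^ s' :=
              mul_le_mul_of_nonneg_left hw (by positivity)
          _ = C * ((n:ℝ) + 1) ^ s' * |u - v| ^ σ := by ring
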